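/- Let V be a vector space over a field k and f : V → V a linear endomorphism which is locally nilpotent, i.e., for every v ∈ V there exists n ∈ ℕ with f^n(v) = 0. Then the rank (dimension, as a cardinal) of the cokernel V/f(V) is at most the rank of the kernel of f. In particular, if ker f is finite-dimensional then coker f is finite-dimensional of dimension at most dim ker f. -/

import Mathlib

open Cardinal

lemma keyA {k : Type*} [Field k] {V : Type*} [AddCommGroup V] [Module k V]
    (f : Module.End k V) (hf : ∀ v : V, ∃ n : ℕ, (f ^ n) v = 0)
    {ι : Type*} [Fintype ι] (v : ι → V)
    (hv : LinearIndependent k fun i => Submodule.Quotient.mk (p := LinearMap.range f) (v i)) :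
    (Fintype.card ι : Cardinal) ≤ Module.rank k ↥(LinearMap.ker f) := by
  classical
  choose nv hnv using fun i => hf (v i)
  set N : ℕ := (Finset.univ.sup nv) with hN
  have hNv : ∀ i, (f ^ N) (v i) = 0 := by
    intro i
    have h1 : nv i ≤ N := Finset.le_sup (Finset.mem_univ i)
    obtain ⟨m, hm⟩ := Nat.exists_eq_add_of_le h1
    rw [hm, add_comm, pow_add, Module.End.mul_apply, hnv, map_zero]
  set S : Set V := Set.range (fun p : ι × Fin (N + 1) => (f ^ (p.2 : ℕ)) (v p.1)) with hS
  set W : Submodule k V := Submodule.span k S with hW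
  have hWfin : FiniteDimensional k W := FiniteDimensional.span_of_finite k (Set.finite_range _)
  have hinv : ∀ x ∈ W, f x ∈ W := by
    intro x hx
    have hle : W.map f ≤ W := by
      rw [hW, Submodule.map_span, Submodule.span_le]
      rintro _ ⟨_, ⟨⟨i, j⟩, rfl⟩, rfl⟩
      show f ((f ^ (j : ℕ)) (v i)) ∈ (Submodule.span k S : Set V)
      by_cases hj : (j : ℕ) < N
      · apply Submodule.subset_span
        refine ⟨(i, ⟨(j : ℕ) + 1, by omega⟩), ?_⟩
        show (f ^ ((j : ℕ) + 1)) (v i) = _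
        rw [pow_succ', Module.End.mul_apply]
      · have hjN : (j : ℕ) = N := by omega
        have h0 : (f ^ (j : ℕ)) (v i) = 0 := by rw [hjN]; exact hNv i
        rw [h0, map_zero]; exact zero_mem _
    exact hle (Submodule.mem_map_of_mem hx)
  set f' : Module.End k W := f.restrict hinv with hf'
  have hvW : ∀ i, v i ∈ W := fun i =>
    Submodule.subset_span ⟨(i, ⟨0, by omega⟩), by simp⟩
  set v' : ι → W := fun i => ⟨v i, hvW i⟩ with hv'
  have hind : LinearIndependent k fun i =>
      Submodule.Quotient.mk (p := LinearMap.range f') (v' i) := by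
    rw [Fintype.linearIndependent_iff] at hv ⊢
    intro g hg i
    apply hv g ?_ i
    have hmk : Submodule.Quotient.mk (p := LinearMap.range f') (∑ j, g j • v' j) = 0 := by
      rw [← Submodule.mkQ_apply, map_sum]
      simp only [map_smul, Submodule.mkQ_apply]
      exact hg
    have hmem := (Submodule.Quotient.mk_eq_zero _).mp hmk
    obtain ⟨x, hx⟩ := hmem
    have hx' : f (x : V) = ∑ j, g j • v j := by
      have h2 := congrArg (Subtype.val) hx
      simp only [hf', LinearMap.restrict_apply, hv'] at h2
      simpa [AddSubmonoidClass.coe_finset_sum] using h2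
    calc ∑ i, g i • Submodule.Quotient.mk (p := LinearMap.range f) (v i)
        = Submodule.Quotient.mk (p := LinearMap.range f) (∑ i, g i • v i) := by
          rw [← Submodule.mkQ_apply, map_sum]; simp [Submodule.mkQ_apply]
      _ = Submodule.Quotient.mk (p := LinearMap.range f) (f (x : V)) := by rw [hx']
      _ = 0 := (Submodule.Quotient.mk_eq_zero _).mpr ⟨x, rfl⟩
  -- now count dimensions
  have hcard : Fintype.card ι ≤ Module.finrank k (↥W ⧸ LinearMap.range f') :=
    hind.fintype_card_le_finrank
  have h1 := Submodule.finrank_quotient_add_finrank (LinearMap.range f')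
  have h2 := LinearMap.finrank_range_add_finrank_ker f'
  have hq : Module.finrank k (↥W ⧸ LinearMap.range f') = Module.finrank k ↥(LinearMap.ker f') := by
    omega
  -- embed ker f' into ker f
  have hker : (Module.finrank k ↥(LinearMap.ker f') : Cardinal) ≤
      Module.rank k ↥(LinearMap.ker f) := by
    let j : ↥(LinearMap.ker f') →ₗ[k] ↥(LinearMap.ker f) := {
      toFun := fun x => ⟨((x : W) : V), by
        have hx0 : f' x.1 = 0 := x.2
        have h3 := congrArg Subtype.val hx0
        simp only [hf', LinearMap.restrict_apply, ZeroMemClass.coe_zero] at h3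
        exact LinearMap.mem_ker.mpr h3⟩
      map_add' := fun a b => by ext; simp
      map_smul' := fun c a => by ext; simp }
    have hjinj : Function.Injective j := by
      intro a b hab
      have h4 := congrArg Subtype.val hab
      exact Subtype.ext (Subtype.ext h4)
    calc (Module.finrank k ↥(LinearMap.ker f') : Cardinal)
        = Module.rank k ↥(LinearMap.ker f') := Module.finrank_eq_rank k _
      _ ≤ Module.rank k ↥(LinearMap.ker f) := LinearMap.rank_le_of_injective j hjinj
  calc (Fintype.card ι : Cardinal)
      ≤ (Module.finrank k ↥(LinearMap.ker f') : Cardinal) := by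
        rw [← hq]; exact_mod_cast hcard
    _ ≤ Module.rank k ↥(LinearMap.ker f) := hker

lemma keyB {k : Type*} [Field k] {V : Type*} [AddCommGroup V] [Module k V]
    (f : Module.End k V) (hf : ∀ v : V, ∃ n : ℕ, (f ^ n) v = 0)
    (hκ : ℵ₀ ≤ Module.rank k ↥(LinearMap.ker f)) :
    Module.rank k V ≤ Module.rank k ↥(LinearMap.ker f) := by
  classical
  set κ := Module.rank k ↥(LinearMap.ker f) with hκdef
  have hKn : ∀ n : ℕ, Module.rank k ↥(LinearMap.ker (f ^ n)) ≤ κ := by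
    intro n
    induction n with
    | zero =>
      have : LinearMap.ker (f ^ 0) = ⊥ := by
        rw [pow_zero]; exact LinearMap.ker_id
      rw [this, rank_bot]
      exact zero_le
    | succ n ih =>
      have hrestrict : ∀ x ∈ LinearMap.ker (f ^ (n + 1)), f x ∈ LinearMap.ker (f ^ n) := by
        intro x hx
        rw [LinearMap.mem_ker] at hx ⊢
        rw [← Module.End.mul_apply, ← pow_succ]
        exact hx
      have h1 := LinearMap.rank_range_add_rank_ker (f.restrict hrestrict)
      have h2 : Module.rank k ↥(LinearMap.range (f.restrict hrestrict)) ≤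
          Module.rank k ↥(LinearMap.ker (f ^ n)) := Submodule.rank_le _
      have h3 : Module.rank k ↥(LinearMap.ker (f.restrict hrestrict)) ≤ κ := by
        let j : ↥(LinearMap.ker (f.restrict hrestrict)) →ₗ[k] ↥(LinearMap.ker f) := {
          toFun := fun x => ⟨((x : ↥(LinearMap.ker (f ^ (n + 1)))) : V), by
            have hx0 : f.restrict hrestrict x.1 = 0 := x.2
            have h4 := congrArg Subtype.val hx0
            simp only [LinearMap.restrict_apply, ZeroMemClass.coe_zero] at h4
            exact LinearMap.mem_ker.mpr h4⟩
          map_add' := fun a b => by ext; simp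
          map_smul' := fun c a => by ext; simp }
        have hjinj : Function.Injective j := by
          intro a b hab
          have h4 := congrArg Subtype.val hab
          exact Subtype.ext (Subtype.ext h4)
        exact LinearMap.rank_le_of_injective j hjinj
      calc Module.rank k ↥(LinearMap.ker (f ^ (n + 1)))
          = Module.rank k ↥(LinearMap.range (f.restrict hrestrict)) +
            Module.rank k ↥(LinearMap.ker (f.restrict hrestrict)) := h1.symm
        _ ≤ κ + κ := add_le_add (h2.trans ih) h3
        _ = κ := Cardinal.add_eq_self hκ
  -- spanning sets
  set B : (n : ℕ) → Set ↥(LinearMap.ker (f ^ n)) :=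
    fun n => Module.Basis.ofVectorSpaceIndex k ↥(LinearMap.ker (f ^ n)) with hB
  set s : ℕ → Set V := fun n => Subtype.val '' (B n) with hs
  have hspan : Submodule.span k (⋃ n, s n) = ⊤ := by
    rw [eq_top_iff]
    intro x _
    obtain ⟨n, hn⟩ := hf x
    have hsp : Submodule.span k (B n) = ⊤ := by
      have := (Module.Basis.ofVectorSpace k ↥(LinearMap.ker (f ^ n))).span_eq
      rwa [Module.Basis.range_ofVectorSpace] at this
    have hx1 : x ∈ Submodule.map (LinearMap.ker (f ^ n)).subtype ⊤ :=
      ⟨⟨x, LinearMap.mem_ker.mpr hn⟩, trivial, rfl⟩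
    rw [← hsp, Submodule.map_span] at hx1
    have hle : Submodule.span k ((LinearMap.ker (f ^ n)).subtype '' (B n)) ≤
        Submodule.span k (⋃ n, s n) := by
      apply Submodule.span_mono
      intro y hy
      exact Set.mem_iUnion.mpr ⟨n, hy⟩
    exact hle hx1
  have hrankV : Module.rank k V = Module.rank k ↥(Submodule.span k (⋃ n, s n)) := by
    rw [hspan, rank_top]
  rw [hrankV]
  have h5 : Cardinal.lift.{0} #(⋃ n, s n) ≤ κ := by
    calc Cardinal.lift.{0} #(⋃ n, s n)
        ≤ Cardinal.sum (fun n : ℕ => #(s n)) := Cardinal.mk_iUnion_le_sum_mk_lift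
      _ ≤ Cardinal.sum (fun _ : ℕ => κ) := by
          apply Cardinal.sum_le_sum
          intro n
          calc #(s n) ≤ #(B n) := Cardinal.mk_image_le
            _ = Module.rank k ↥(LinearMap.ker (f ^ n)) :=
              (Module.Basis.ofVectorSpace k ↥(LinearMap.ker (f ^ n))).mk_eq_rank''
            _ ≤ κ := hKn n
      _ = Cardinal.lift #ℕ * Cardinal.lift κ := Cardinal.sum_const ℕ κ
      _ = ℵ₀ * κ := by simp
      _ = κ := by
          rw [Cardinal.mul_eq_max le_rfl hκ]
          exact max_eq_right hκ
  have h6 : #(⋃ n, s n) ≤ κ := by simpa using h5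
  exact (rank_span_le _).trans h6

/-- If `f` is a locally nilpotent endomorphism of a vector space `V`, then the rank of
the cokernel `V ⧸ range f` is at most the rank of `ker f`; in particular if `ker f` is
finite-dimensional then so is the cokernel, with dimension at most `dim ker f`. -/
theorem locallyNilpotent_rank_coker_le_rank_ker
    (k : Type*) [Field k] (V : Type*) [AddCommGroup V] [Module k V]
    (f : Module.End k V) (hf : ∀ v : V, ∃ n : ℕ, (f ^ n) v = 0) :
    Module.rank k (V ⧸ LinearMap.range f) ≤ Module.rank k ↥(LinearMap.ker f) ∧
    (FiniteDimensional k ↥(LinearMap.ker f) →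
      FiniteDimensional k (V ⧸ LinearMap.range f) ∧
      Module.finrank k (V ⧸ LinearMap.range f) ≤
        Module.finrank k ↥(LinearMap.ker f)) := by
  classical
  have hrank : Module.rank k (V ⧸ LinearMap.range f) ≤ Module.rank k ↥(LinearMap.ker f) := by
    by_cases hfin : Module.rank k ↥(LinearMap.ker f) < ℵ₀
    · obtain ⟨n, hn⟩ := Cardinal.lt_aleph0.mp hfin
      rw [hn]
      apply rank_le
      intro t ht
      choose v hv using fun x : t =>
        Submodule.Quotient.mk_surjective (LinearMap.range f) (x : V ⧸ LinearMap.range f)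
      have hind : LinearIndependent k fun x : t =>
          Submodule.Quotient.mk (p := LinearMap.range f) (v x) := by
        have heq : (fun x : t => Submodule.Quotient.mk (p := LinearMap.range f) (v x)) =
            (fun x : t => (x : V ⧸ LinearMap.range f)) := funext fun x => hv x
        rw [heq]
        exact ht
      have hcard := keyA f hf v hind
      rw [hn, Fintype.card_coe] at hcard
      exact_mod_cast hcard
    · push_neg at hfin
      exact ((LinearMap.range f).mkQ.rank_le_of_surjective
        (Submodule.Quotient.mk_surjective _)).trans (keyB f hf hfin)
  refine ⟨hrank, fun hfd => ?_⟩
  have hlt : Module.rank k (V ⧸ LinearMap.range f) < ℵ₀ :=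
    hrank.trans_lt (Module.rank_lt_aleph0 k _)
  have hfd' : FiniteDimensional k (V ⧸ LinearMap.range f) :=
    Module.rank_lt_aleph0_iff.mp hlt
  refine ⟨hfd', ?_⟩
  exact Module.finrank_le_of_rank_le (by rw [Module.finrank_eq_rank]; exact hrank)
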